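/- For all $n \ge 26$, the number of partitions of $n+1$ into distinct odd parts strictly exceeds the number of partitions of $n$ into distinct odd parts: $q(n+1) > q(n)$. -/
import Mathlib


/-- `qOdd n` is the number of partitions of `n` into distinct odd parts. -/
def qOdd (n : ℕ) : ℕ :=
  Fintype.card {p : n.Partition // p.parts.Nodup ∧ ∀ i ∈ p.parts, Odd i}

namespace QOddAux

/-- The largest element of a multiset of naturals (0 if empty). -/
def maxPart (s : Multiset ℕ) : ℕ := s.toFinset.sup id

lemma le_maxPart {s : Multiset ℕ} {a : ℕ} (h : a ∈ s) : a ≤ maxPart s :=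
  Finset.le_sup (f := id) (Multiset.mem_toFinset.2 h)

/-- The basic injection: if `1 ∉ s` add a part `1`; otherwise remove the part `1`
and increase the largest part by `2`. -/
def stepParts (s : Multiset ℕ) : Multiset ℕ :=
  if 1 ∈ s then (maxPart s + 2) ::ₘ ((s.erase 1).erase (maxPart s)) else 1 ::ₘ s

lemma key {n : ℕ} {s : Multiset ℕ} (hn : 26 ≤ n) (h1 : 1 ∈ s)
    (hd : s.Nodup) (hodd : ∀ i ∈ s, Odd i) (hsum : s.sum = n) :
    ∃ A : Multiset ℕ, s = 1 ::ₘ (maxPart s) ::ₘ A ∧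
      stepParts s = (maxPart s + 2) ::ₘ A ∧ 3 ≤ maxPart s := by
  set m := maxPart s with hm
  obtain ⟨i, hi, hieq⟩ := Finset.exists_mem_eq_sup s.toFinset
    ⟨1, Multiset.mem_toFinset.2 h1⟩ id
  have hmems : m ∈ s := by rw [hm, maxPart, hieq]; exact Multiset.mem_toFinset.1 hi
  have hne : s.erase 1 ≠ 0 := by
    intro h0
    have hs1 : s = {1} := by rw [← Multiset.cons_erase h1, h0]; rfl
    rw [hs1] at hsum; simp at hsum; omega
  obtain ⟨x, hx⟩ := Multiset.exists_mem_of_ne_zero hne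
  have hx1 : x ≠ 1 := by
    intro h; subst h; exact hd.notMem_erase hx
  have hxs : x ∈ s := Multiset.mem_of_mem_erase hx
  have hx3 : 3 ≤ x := by rcases hodd x hxs with ⟨k, hk⟩; omega
  have h3m : 3 ≤ m := le_trans hx3 (le_maxPart hxs)
  have hm1 : m ≠ 1 := by omega
  have hmem1 : m ∈ s.erase 1 := (Multiset.mem_erase_of_ne hm1).2 hmems
  refine ⟨(s.erase 1).erase m, ?_, ?_, h3m⟩
  · rw [Multiset.cons_erase hmem1, Multiset.cons_erase h1]
  · rw [stepParts, if_pos h1]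

lemma step_spec {n : ℕ} {s : Multiset ℕ} (hn : 26 ≤ n)
    (hd : s.Nodup) (hodd : ∀ i ∈ s, Odd i) (hpos : ∀ i ∈ s, 0 < i) (hsum : s.sum = n) :
    (stepParts s).Nodup ∧ (∀ i ∈ stepParts s, Odd i) ∧ (∀ i ∈ stepParts s, 0 < i) ∧
      (stepParts s).sum = n + 1 := by
  by_cases h1 : 1 ∈ s
  · obtain ⟨A, hrep, hstep, h3⟩ := key hn h1 hd hodd hsum
    set m := maxPart s with hm
    have hAmem : ∀ x ∈ A, x ∈ s := by
      intro x hx; rw [hrep]; simp [hx]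
    have hnodA : m ∉ A ∧ A.Nodup := by
      rw [hrep] at hd
      simp [Multiset.nodup_cons] at hd
      exact ⟨hd.2.1, hd.2.2⟩
    have hm2 : m + 2 ∉ A := by
      intro h; have := le_maxPart (hAmem _ h); omega
    have hmodd : Odd m := hodd m (by rw [hrep]; simp)
    refine ⟨?_, ?_, ?_, ?_⟩
    · rw [hstep, Multiset.nodup_cons]; exact ⟨hm2, hnodA.2⟩
    · rw [hstep]; intro i hi
      rcases Multiset.mem_cons.1 hi with h | h
      · subst h; rcases hmodd with ⟨k, hk⟩; exact ⟨k + 1, by omega⟩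
      · exact hodd i (hAmem _ h)
    · rw [hstep]; intro i hi
      rcases Multiset.mem_cons.1 hi with h | h
      · omega
      · exact hpos i (hAmem _ h)
    · have := hsum
      rw [hrep] at this
      simp [Multiset.sum_cons] at this
      rw [hstep]; simp [Multiset.sum_cons]; omega
  · refine ⟨?_, ?_, ?_, ?_⟩
    · rw [stepParts, if_neg h1, Multiset.nodup_cons]; exact ⟨h1, hd⟩
    · rw [stepParts, if_neg h1]; intro i hi
      rcases Multiset.mem_cons.1 hi with h | h
      · subst h; exact odd_one
      · exact hodd i h
    · rw [stepParts, if_neg h1]; intro i hi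
      rcases Multiset.mem_cons.1 hi with h | h
      · omega
      · exact hpos i h
    · rw [stepParts, if_neg h1]; simp [Multiset.sum_cons, hsum]; omega

lemma one_notMem_step {n : ℕ} {s : Multiset ℕ} (hn : 26 ≤ n) (h1 : 1 ∈ s)
    (hd : s.Nodup) (hodd : ∀ i ∈ s, Odd i) (hsum : s.sum = n) :
    1 ∉ stepParts s := by
  obtain ⟨A, hrep, hstep, h3⟩ := key hn h1 hd hodd hsum
  have h1A : 1 ∉ A := by
    rw [hrep] at hd
    simp [Multiset.nodup_cons] at hd
    exact hd.1.2
  rw [hstep]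
  intro h
  rcases Multiset.mem_cons.1 h with h | h
  · omega
  · exact h1A h

lemma step_inj {n : ℕ} (hn : 26 ≤ n) {s t : Multiset ℕ}
    (hds : s.Nodup) (hodds : ∀ i ∈ s, Odd i) (hsums : s.sum = n)
    (hdt : t.Nodup) (hoddt : ∀ i ∈ t, Odd i) (hsumt : t.sum = n)
    (he : stepParts s = stepParts t) : s = t := by
  by_cases h1s : 1 ∈ s <;> by_cases h1t : 1 ∈ t
  · obtain ⟨A, hsr, hss, h3s⟩ := key hn h1s hds hodds hsums
    obtain ⟨B, htr, hts, h3t⟩ := key hn h1t hdt hoddt hsumt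
    have boundt : ∀ x ∈ stepParts t, x ≤ maxPart t + 2 := by
      rw [hts]; intro x hx
      rcases Multiset.mem_cons.1 hx with h | h
      · omega
      · have : x ∈ t := by rw [htr]; simp [h]
        have := le_maxPart this; omega
    have bounds : ∀ x ∈ stepParts s, x ≤ maxPart s + 2 := by
      rw [hss]; intro x hx
      rcases Multiset.mem_cons.1 hx with h | h
      · omega
      · have : x ∈ s := by rw [hsr]; simp [h]
        have := le_maxPart this; omega
    have hms : maxPart s + 2 ∈ stepParts s := by rw [hss]; simp
    have hmt : maxPart t + 2 ∈ stepParts t := by rw [hts]; simp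
    have l1 : maxPart s + 2 ≤ maxPart t + 2 := boundt _ (he ▸ hms)
    have l2 : maxPart t + 2 ≤ maxPart s + 2 := bounds _ (he ▸ hmt)
    have hmeq : maxPart s = maxPart t := by omega
    rw [hss, hts, hmeq] at he
    have hAB : A = B := (Multiset.cons_inj_right _).1 he
    rw [hsr, htr, hmeq, hAB]
  · exfalso
    have h1' : 1 ∈ stepParts t := by
      rw [stepParts, if_neg h1t]; exact Multiset.mem_cons_self 1 t
    rw [← he] at h1'
    exact one_notMem_step hn h1s hds hodds hsums h1'
  · exfalso
    have h1' : 1 ∈ stepParts s := by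
      rw [stepParts, if_neg h1s]; exact Multiset.mem_cons_self 1 s
    rw [he] at h1'
    exact one_notMem_step hn h1t hdt hoddt hsumt h1'
  · rw [stepParts, if_neg h1s, stepParts, if_neg h1t] at he
    exact (Multiset.cons_inj_right _).1 he

lemma not_image {n : ℕ} (hn : 26 ≤ n) {s w : Multiset ℕ}
    (hd : s.Nodup) (hodd : ∀ i ∈ s, Odd i) (hsum : s.sum = n)
    (K : ℕ) (hK2 : 2 ≤ K) (h1w : 1 ∉ w) (hK1 : K + 1 ∈ w) (hKm : K - 1 ∈ w)
    (hbd : ∀ x ∈ w, x ≤ K + 1) : stepParts s ≠ w := by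
  intro he
  by_cases h1 : 1 ∈ s
  · obtain ⟨A, hrep, hstep, h3⟩ := key hn h1 hd hodd hsum
    set m := maxPart s with hm
    rw [hstep] at he
    have hm2w : m + 2 ∈ w := by rw [← he]; simp
    have hub : m + 2 ≤ K + 1 := hbd _ hm2w
    have hKmem : K + 1 = m + 2 ∨ K + 1 ∈ A := by
      have := hK1; rw [← he] at this; exact Multiset.mem_cons.1 this
    have hKeq : K + 1 = m + 2 := by
      rcases hKmem with h | h
      · exact h
      · have : K + 1 ∈ s := by rw [hrep]; simp [h]
        have := le_maxPart this; omega
    have hKmA : K - 1 ∈ A := by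
      have := hKm; rw [← he] at this
      rcases Multiset.mem_cons.1 this with h | h
      · omega
      · exact h
    have hmA : m ∈ A := by
      have : K - 1 = m := by omega
      rwa [this] at hKmA
    rw [hrep] at hd
    simp [Multiset.nodup_cons] at hd
    exact hd.2.1 hmA
  · rw [stepParts, if_neg h1] at he
    exact h1w (he ▸ Multiset.mem_cons_self 1 s)

lemma exists_witness (N : ℕ) (hN : 27 ≤ N) :
    ∃ (w : Multiset ℕ) (K : ℕ), w.sum = N ∧ w.Nodup ∧ (∀ i ∈ w, Odd i) ∧
      (∀ i ∈ w, 0 < i) ∧ 2 ≤ K ∧ 1 ∉ w ∧ K + 1 ∈ w ∧ K - 1 ∈ w ∧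
      ∀ x ∈ w, x ≤ K + 1 := by
  have h4 : N % 4 = 0 ∨ N % 4 = 1 ∨ N % 4 = 2 ∨ N % 4 = 3 := by omega
  rcases h4 with h | h | h | h
  · refine ⟨{N / 2 + 1, N / 2 - 1}, N / 2, ?_, ?_, ?_, ?_, by omega, ?_, by simp, by simp, ?_⟩
    · simp [Multiset.sum_cons]; omega
    · simp; omega
    · intro i hi; simp at hi; rw [Nat.odd_iff]; omega
    · intro i hi; simp at hi; omega
    · simp; omega
    · intro x hx; simp at hx; omega
  · refine ⟨{(N - 5) / 2 + 1, (N - 5) / 2 - 1, 5}, (N - 5) / 2, ?_, ?_, ?_, ?_, by omega, ?_,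
      by simp, by simp, ?_⟩
    · simp [Multiset.sum_cons]; omega
    · simp; omega
    · intro i hi; simp at hi; rw [Nat.odd_iff]; omega
    · intro i hi; simp at hi; omega
    · simp; omega
    · intro x hx; simp at hx; omega
  · refine ⟨{(N - 10) / 2 + 1, (N - 10) / 2 - 1, 7, 3}, (N - 10) / 2, ?_, ?_, ?_, ?_, by omega,
      ?_, by simp, by simp, ?_⟩
    · simp [Multiset.sum_cons]; omega
    · simp; omega
    · intro i hi; simp at hi; rw [Nat.odd_iff]; omega
    · intro i hi; simp at hi; omega
    · simp; omega
    · intro x hx; simp at hx; omega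
  · refine ⟨{(N - 3) / 2 + 1, (N - 3) / 2 - 1, 3}, (N - 3) / 2, ?_, ?_, ?_, ?_, by omega, ?_,
      by simp, by simp, ?_⟩
    · simp [Multiset.sum_cons]; omega
    · simp; omega
    · intro i hi; simp at hi; rw [Nat.odd_iff]; omega
    · intro i hi; simp at hi; omega
    · simp; omega
    · intro x hx; simp at hx; omega

end QOddAux

open QOddAux in
/-- For all `n ≥ 26`, the number of partitions of `n+1` into distinct odd parts strictly
exceeds the number of partitions of `n` into distinct odd parts. -/
theorem qOdd_strict_mono (n : ℕ) (hn : 26 ≤ n) : qOdd n < qOdd (n + 1) := by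
  classical
  let f : {p : n.Partition // p.parts.Nodup ∧ ∀ i ∈ p.parts, Odd i} →
      {p : (n + 1).Partition // p.parts.Nodup ∧ ∀ i ∈ p.parts, Odd i} :=
    fun p =>
      have hs := step_spec hn p.2.1 p.2.2 (fun _ hi => p.1.parts_pos hi) p.1.parts_sum
      ⟨⟨stepParts p.1.parts, fun hi => hs.2.2.1 _ hi, hs.2.2.2⟩, hs.1, hs.2.1⟩
  have hinj : Function.Injective f := by
    intro a b hab
    have h' : stepParts a.1.parts = stepParts b.1.parts :=
      congrArg (fun q => q.1.parts) hab
    have := step_inj hn a.2.1 a.2.2 a.1.parts_sum b.2.1 b.2.2 b.1.parts_sum h'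
    exact Subtype.ext (Nat.Partition.ext this)
  obtain ⟨w, K, hwsum, hwnd, hwodd, hwpos, hK2, h1w, hK1, hKm, hbd⟩ :=
    exists_witness (n + 1) (by omega)
  have hnm : (⟨⟨w, fun hi => hwpos _ hi, hwsum⟩, hwnd, hwodd⟩ :
      {p : (n + 1).Partition // p.parts.Nodup ∧ ∀ i ∈ p.parts, Odd i}) ∉ Set.range f := by
    rintro ⟨a, ha⟩
    have h' : stepParts a.1.parts = w := congrArg (fun q => q.1.parts) ha
    exact not_image hn a.2.1 a.2.2 a.1.parts_sum K hK2 h1w hK1 hKm hbd h'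
  exact Fintype.card_lt_of_injective_of_notMem f hinj hnm
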